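/- Let m ≥ 2, let s_1,…,s_m be nonnegative integers with total t = s_1+⋯+s_m, and let R_j = {l_j,…,u_j} be arbitrary discrete intervals with 0 ≤ l_j ≤ u_j ≤ s_j for each j. Let Y_1,…,Y_m be independent random variables with Y_j ~ Bin(s_j, 1/2), let Y = Y_1+⋯+Y_m (so Y ~ Bin(t, 1/2)), and let W_1,…,W_m be independent random variables with P[W_j = k] = P[Y_j = k]/P[Y_j ∈ R_j] for k ∈ R_j and 0 otherwise, and W = W_1+⋯+W_m. Then for every n with 0 ≤ n ≤ t, the multiple hypergeometric rectangle probability satisfies P[X ∈ R(l,u)] = M(n)/C(t,n) = P[W = n]·∏_{j=1}^m P[Y_j ∈ R_j] / P[Y = n], where M(n) = ∑ ∏_j C(s_j, x_j) over all x ∈ ℕ^m with ∑ x_j = n and x_j ∈ R_j for all j, and X ~ H_m(n; s), R(l,u) = (R_1 × ⋯ × R_m) ∩ Ω_{m,n}. -/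

import Mathlib

/-- Lemma 1 (Levin): representation of multiple hypergeometric rectangle
probabilities via a convolution of truncated binomials. With
`Y_j ~ Bin(s_j, 1/2)` independent, `W_j` the restriction of `Y_j` to
`R_j = {l_j,…,u_j}`, `Y = ∑ Y_j ~ Bin(t, 1/2)` and `W = ∑ W_j`, one has
`P[X ∈ R(l,u)] = M(n)/C(t,n) = P[W = n]·∏_j P[Y_j ∈ R_j] / P[Y = n]`. -/
theorem levin_representation (m : ℕ) (hm : 2 ≤ m) (s l u : Fin m → ℕ)
    (hlu : ∀ j, l j ≤ u j) (hus : ∀ j, u j ≤ s j)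
    (t : ℕ) (ht : t = ∑ j, s j)
    (n : ℕ) (hn : n ≤ t)
    (pY : Fin m → ℕ → ℚ)
    (hpY : ∀ j k, pY j k = ((s j).choose k : ℚ) / 2 ^ (s j))
    (q : Fin m → ℚ)
    (hq : ∀ j, q j = ∑ k ∈ Finset.Icc (l j) (u j), pY j k)
    (pW : Fin m → ℕ → ℚ)
    (hpW : ∀ j k, pW j k = if k ∈ Finset.Icc (l j) (u j) then pY j k / q j else 0)
    (pWsum : ℕ → ℚ)
    (hpWsum : ∀ r, pWsum r = ∑ x ∈ (Fintype.piFinset fun j => Finset.Icc (l j) (u j)).filter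
        (fun x => ∑ j, x j = r), ∏ j, pW j (x j))
    (pYsum : ℕ → ℚ)
    (hpYsum : ∀ r, pYsum r = (t.choose r : ℚ) / 2 ^ t)
    (M : ℕ → ℕ)
    (hM : ∀ r, M r = ∑ x ∈ (Fintype.piFinset fun j => Finset.Icc (l j) (u j)).filter
        (fun x => ∑ j, x j = r), ∏ j, (s j).choose (x j)) :
    (M n : ℚ) / t.choose n = pWsum n * (∏ j, q j) / pYsum n := by
  have h2 : (2:ℚ) ^ t ≠ 0 := by positivity
  have hqpos : ∀ j, 0 < q j := by
    intro j
    rw [hq]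
    apply Finset.sum_pos'
    · intro k _
      rw [hpY]; positivity
    · refine ⟨l j, Finset.mem_Icc.mpr ⟨le_refl _, hlu j⟩, ?_⟩
      rw [hpY]
      have : 0 < (s j).choose (l j) := Nat.choose_pos ((hlu j).trans (hus j))
      positivity
  have hqprod : (∏ j, q j) ≠ 0 := Finset.prod_ne_zero_iff.mpr fun j _ => (hqpos j).ne'
  have hchoose : (t.choose n : ℚ) ≠ 0 := by
    exact_mod_cast (Nat.choose_pos hn).ne'
  have hpow : ∏ j, (2:ℚ) ^ (s j) = 2 ^ t := by
    rw [ht, Finset.prod_pow_eq_pow_sum]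
  have key : pWsum n = (M n : ℚ) / (2 ^ t * ∏ j, q j) := by
    rw [hpWsum, hM]
    push_cast
    rw [Finset.sum_div]
    apply Finset.sum_congr rfl
    intro x hx
    rw [Finset.mem_filter, Fintype.mem_piFinset] at hx
    have : ∀ j, pW j (x j) = ((s j).choose (x j) : ℚ) / 2 ^ (s j) / q j := by
      intro j
      rw [hpW, if_pos (hx.1 j), hpY]
    simp_rw [this]
    rw [Finset.prod_div_distrib, Finset.prod_div_distrib, hpow, div_div]
  rw [key, hpYsum]
  field_simp
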